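/- If f : ω₁ → ω₁ is a function such that f(α) < α for every nonzero countable ordinal α, then there exists an ordinal β < ω₁ such that f(α) = β for uncountably many α < ω₁. -/

import Mathlib

open Cardinal in
/-- If `f : ω₁ → ω₁` satisfies `f α < α` for every nonzero `α < ω₁`, then some value
`β < ω₁` is attained by `f` on an uncountable (cardinality at least `ℵ₁`) set of `α < ω₁`. -/
theorem regressive_constant_on_uncountable (f : Ordinal → Ordinal)
    (hf : ∀ α : Ordinal, α < (aleph 1).ord → α ≠ 0 → f α < α) :
    ∃ β : Ordinal, β < (aleph 1).ord ∧
      aleph 1 ≤ #{α : Ordinal // α < (aleph 1).ord ∧ f α = β} := by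
  by_contra hcon
  push_neg at hcon
  set o := (aleph 1).ord with ho
  have holim : Order.IsSuccLimit o := Cardinal.isSuccLimit_ord (aleph0_le_aleph 1)
  -- all fibers are countable
  have hfib : ∀ β : Ordinal, {α | α < o ∧ f α = β}.Countable := by
    intro β
    by_cases hβ : β < o
    · rw [countable_iff_lt_aleph_one]
      exact hcon β hβ
    · apply Set.Countable.mono _ (Set.countable_singleton (0 : Ordinal))
      intro α hα
      rcases eq_or_ne α 0 with h0 | h0
      · simp [h0]
      · exact absurd (hα.2 ▸ (hf α hα.1 h0).trans hα.1) hβ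
  -- initial segments of the preimage are bounded
  have step : ∀ γ, γ < o → ∃ δ, γ < δ ∧ δ < o ∧ ∀ α, α < o → f α ≤ γ → α < δ := by
    intro γ hγ
    have hIic : (Set.Iic γ).Countable := by
      have hIicIio : Set.Iic γ = Set.Iio (γ + 1) := by
        ext x; simp only [Set.mem_Iic, Set.mem_Iio]; exact Order.lt_add_one_iff.symm
      rw [countable_iff_lt_aleph_one, hIicIio, Ordinal.mk_Iio_ordinal,
        ← succ_aleph0, Order.lt_succ_iff, ← lift_aleph0.{u_1 + 1, u_1}, lift_le]
      have h1 : (γ + 1).card < aleph 1 := Cardinal.lt_ord.mp (holim.succ_lt hγ)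
      rwa [← succ_aleph0, Order.lt_succ_iff] at h1
    have hS : {α | α < o ∧ f α ≤ γ}.Countable := by
      refine Set.Countable.mono ?_ (hIic.biUnion fun β _ => hfib β)
      intro α hα
      exact Set.mem_biUnion (hα.2 : f α ≤ γ) ⟨hα.1, rfl⟩
    rcases Set.eq_empty_or_nonempty {α | α < o ∧ f α ≤ γ} with he | hne
    · refine ⟨γ + 1, lt_add_one γ, ?_, ?_⟩
      · rw [Ordinal.add_one_eq_succ]; exact holim.succ_lt hγ
      · intro α hα hfa
        exact absurd (Set.mem_setOf.mpr ⟨hα, hfa⟩) (he ▸ Set.notMem_empty α)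
    · obtain ⟨g, hg⟩ := Set.Countable.exists_eq_range hS hne
      have hgmem : ∀ n, g n ∈ {α | α < o ∧ f α ≤ γ} := by
        intro n; rw [hg]; exact Set.mem_range_self n
      have hsup : (⨆ n, g n + 1) < o := by
        rw [ho, Cardinal.ord_aleph]
        apply Ordinal.iSup_lt_omega_one
        intro n
        rw [← Cardinal.ord_aleph, ← ho]
        rw [Ordinal.add_one_eq_succ]
        exact holim.succ_lt (hgmem n).1
      refine ⟨max (γ + 1) (⨆ n, g n + 1), lt_max_of_lt_left (lt_add_one γ), ?_, ?_⟩
      · apply max_lt _ hsup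
        rw [Ordinal.add_one_eq_succ]; exact holim.succ_lt hγ
      · intro α hα hfa
        have : α ∈ Set.range g := by rw [← hg]; exact ⟨hα, hfa⟩
        obtain ⟨n, rfl⟩ := this
        refine lt_max_of_lt_right (lt_of_lt_of_le (lt_add_one _) ?_)
        exact le_ciSup Ordinal.bddAbove_of_small n
  -- build the sequence
  choose d hd1 hd2 hd3 using step
  have h1o : (1 : Ordinal) < o := by
    refine lt_of_lt_of_le ?_ (Cardinal.ord_le_ord.mpr (aleph0_le_aleph 1))
    rw [Cardinal.ord_aleph0]
    exact Ordinal.one_lt_omega0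
  classical
  let D : Ordinal → Ordinal := fun x => if h : x < o then d x h else 0
  let c : ℕ → Ordinal := fun n => D^[n] 1
  have hc0 : c 0 = 1 := rfl
  have hcsD : ∀ n, c (n + 1) = D (c n) := fun n => Function.iterate_succ_apply' D n 1
  have hco : ∀ n, c n < o := by
    intro n
    induction n with
    | zero => exact h1o
    | succ n ih =>
      rw [hcsD n]
      show (if h : c n < o then d (c n) h else 0) < o
      rw [dif_pos ih]
      exact hd2 _ ih
  have hcs : ∀ n, c (n + 1) = d (c n) (hco n) := by
    intro n
    rw [hcsD n]
    show (if h : c n < o then d (c n) h else 0) = _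
    rw [dif_pos (hco n)]
  set lam := ⨆ n, c n with hlam
  have hbdd : BddAbove (Set.range c) := Ordinal.bddAbove_of_small
  have hlamo : lam < o := by
    have h := hco; rw [ho, Cardinal.ord_aleph] at h ⊢; exact Ordinal.iSup_lt_omega_one h
  have hlam0 : lam ≠ 0 := by
    have : (1 : Ordinal) ≤ lam := hc0 ▸ le_ciSup hbdd 0
    exact fun h => by simp [h] at this
  have hflam : f lam < lam := hf lam hlamo hlam0
  obtain ⟨n, hn⟩ : ∃ n, f lam < c n := by
    rw [hlam] at hflam
    exact (lt_ciSup_iff hbdd).mp hflam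
  have : lam < c (n + 1) := by
    rw [hcs n]
    exact hd3 (c n) (hco n) lam hlamo hn.le
  exact absurd (le_ciSup hbdd (n + 1)) (not_le.mpr this)
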